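/- The forgetful map π from the Hopf algebra H of TAGs to the commutative Hopf algebra H^c of graphs (with disjoint union product and subgraph/contraction coproduct), defined on TAGs by π(Γ,μ) = Γ, is a morphism of Hopf algebras. -/

import Mathlib

open scoped Classical TensorProduct

/-- A concrete representative of a totally assigned graph (TAG): a graph with totally
ordered edge set (edges carry the standard labelling `Fin ne`), whose vertices are
natural numbers (the vertex set being the set of endpoints of edges, so that there
are no isolated vertices). -/
structure PreTAG where
  ne : ℕ
  ends : Fin ne → Sym2 ℕ

/-- Isomorphism of TAG representatives: a bijection of vertices matching up the
edges *preserving the total edge order*. -/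
def TagRel (a b : PreTAG) : Prop :=
  ∃ (hm : a.ne = b.ne) (e : ℕ ≃ ℕ),
    ∀ i : Fin a.ne, Sym2.map e (a.ends i) = b.ends (Fin.cast hm i)

theorem tagRel_refl (a : PreTAG) : TagRel a a :=
  ⟨rfl, Equiv.refl ℕ, fun i => by simp⟩

theorem tagRel_symm : ∀ {a b : PreTAG}, TagRel a b → TagRel b a := by
  rintro a b ⟨hm, e, h⟩
  refine ⟨hm.symm, e.symm, fun j => ?_⟩
  have h2 := h (Fin.cast hm.symm j)
  have h3 : Fin.cast hm (Fin.cast hm.symm j) = j := by ext; simp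
  rw [h3] at h2
  rw [← h2, Sym2.map_map]
  simp [Equiv.symm_comp_self]

theorem tagRel_trans : ∀ {a b c : PreTAG}, TagRel a b → TagRel b c → TagRel a c := by
  rintro a b c ⟨hm, e, h⟩ ⟨hm', e', h'⟩
  refine ⟨hm.trans hm', e.trans e', fun i => ?_⟩
  have h2 := h' (Fin.cast hm i)
  have h3 : Fin.cast hm' (Fin.cast hm i) = Fin.cast (hm.trans hm') i := by ext; simp
  rw [h3] at h2
  rw [← h2, ← h i, Sym2.map_map]
  rfl

instance tagSetoid : Setoid PreTAG :=
  ⟨TagRel, ⟨tagRel_refl, tagRel_symm, tagRel_trans⟩⟩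

/-- Totally assigned graphs: isomorphism classes of representatives. -/
def TAGQ := Quotient tagSetoid

/-- The empty TAG, unit of the product. -/
def emptyPre : PreTAG := ⟨0, fun i => i.elim0⟩

/-- Disjoint union of two TAG representatives, with the ordinal sum order on edges
(all edges of `a` come before all edges of `b`); vertices are kept disjoint by
relabelling through `2*·` and `2*·+1`. -/
def mulPre (a b : PreTAG) : PreTAG where
  ne := a.ne + b.ne
  ends := fun i =>
    match finSumFinEquiv.symm i with
    | Sum.inl j => (a.ends j).map (fun v => 2 * v)
    | Sum.inr j => (b.ends j).map (fun v => 2 * v + 1)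

/-- Product of TAGs: disjoint union with the ordinal sum order. -/
noncomputable def mulQ (x y : TAGQ) : TAGQ := ⟦mulPre x.out y.out⟧

/-- The totally assigned subgraph of `a` determined by a subset `S` of its edges:
its edges are those in `S` with the order (and endpoints) induced from `a`. -/
noncomputable def subPre (a : PreTAG) (S : Finset (Fin a.ne)) : PreTAG where
  ne := S.card
  ends := fun j => a.ends (S.orderIsoOfFin rfl j)

/-- Two vertices are directly linked in the subgraph with edge set `S`. -/
def conRel (a : PreTAG) (S : Finset (Fin a.ne)) : ℕ → ℕ → Prop :=
  fun u v => ∃ i ∈ S, u ∈ a.ends i ∧ v ∈ a.ends i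

/-- The contraction (shrinking) `a / S`: each connected component of the subgraph with
edge set `S` is shrunk to a single vertex (the least vertex of the component); the
remaining edges are those not in `S`, with the order induced from `a`. -/
noncomputable def conPre (a : PreTAG) (S : Finset (Fin a.ne)) : PreTAG where
  ne := Sᶜ.card
  ends := fun j =>
    (a.ends (Sᶜ.orderIsoOfFin rfl j)).map
      (fun v => sInf {u | Relation.EqvGen (conRel a S) u v})

/-- The free vector space spanned by TAGs. -/
abbrev HT (K : Type) [Field K] : Type := TAGQ →₀ K

/-- The unit: the empty TAG. -/
noncomputable def oneH (K : Type) [Field K] : HT K := Finsupp.single ⟦emptyPre⟧ 1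

/-- The product of `HT K`, bilinear extension of the product of TAGs. -/
noncomputable def mulLin (K : Type) [Field K] : HT K →ₗ[K] HT K →ₗ[K] HT K :=
  Finsupp.lsum K fun a => LinearMap.smulRight LinearMap.id
    (Finsupp.lsum K fun b => LinearMap.smulRight LinearMap.id
      (Finsupp.single (mulQ a b) 1))

/-- The product as a map `HT K ⊗ HT K → HT K`. -/
noncomputable def mulMap (K : Type) [Field K] : HT K ⊗[K] HT K →ₗ[K] HT K :=
  TensorProduct.lift (mulLin K)

/-- Coproduct of a single TAG: the sum over all totally assigned subgraphs
(equivalently, over all subsets of the edge set) of subgraph ⊗ contracted graph. -/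
noncomputable def deltaT (K : Type) [Field K] (g : TAGQ) : HT K ⊗[K] HT K :=
  ∑ S : Finset (Fin g.out.ne),
    Finsupp.single (⟦subPre g.out S⟧ : TAGQ) (1 : K) ⊗ₜ
      Finsupp.single (⟦conPre g.out S⟧ : TAGQ) (1 : K)

/-- The coproduct of `HT K`. -/
noncomputable def deltaH (K : Type) [Field K] : HT K →ₗ[K] HT K ⊗[K] HT K :=
  Finsupp.lsum K fun g => LinearMap.smulRight LinearMap.id (deltaT K g)

/-- The counit: coefficient of the empty TAG. -/
noncomputable def epsH (K : Type) [Field K] : HT K →ₗ[K] K :=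
  Finsupp.lapply ⟦emptyPre⟧


/-- Isomorphism of graph representatives, forgetting the edge order. -/
def GraphRel (a b : PreTAG) : Prop :=
  ∃ (σ : Fin a.ne ≃ Fin b.ne) (e : ℕ ≃ ℕ),
    ∀ i : Fin a.ne, Sym2.map e (a.ends i) = b.ends (σ i)

def graphSetoid : Setoid PreTAG :=
  ⟨GraphRel, by
    constructor
    · exact fun a => ⟨Equiv.refl _, Equiv.refl ℕ, fun i => by simp⟩
    · rintro a b ⟨σ, e, h⟩
      refine ⟨σ.symm, e.symm, fun j => ?_⟩
      have h2 := h (σ.symm j)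
      rw [Equiv.apply_symm_apply] at h2
      rw [← h2, Sym2.map_map]
      simp [Equiv.symm_comp_self]
    · rintro a b c ⟨σ, e, h⟩ ⟨σ', e', h'⟩
      refine ⟨σ.trans σ', e.trans e', fun i => ?_⟩
      have : (σ.trans σ') i = σ' (σ i) := rfl
      rw [this, ← h' (σ i), ← h i, Sym2.map_map]
      rfl⟩

/-- Graphs: isomorphism classes of representatives with the edge order forgotten. -/
def GQ := Quotient graphSetoid

/-- The commutative algebra of graphs. -/
abbrev HC (K : Type) [Field K] : Type := GQ →₀ K

noncomputable def oneC (K : Type) [Field K] : HC K :=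
  Finsupp.single (Quotient.mk graphSetoid emptyPre) 1

/-- Product of `HC K`: bilinear extension of the disjoint union of graphs. -/
noncomputable def mulLinC (K : Type) [Field K] : HC K →ₗ[K] HC K →ₗ[K] HC K :=
  Finsupp.lsum K fun a => LinearMap.smulRight LinearMap.id
    (Finsupp.lsum K fun b => LinearMap.smulRight LinearMap.id
      (Finsupp.single (Quotient.mk graphSetoid (mulPre a.out b.out)) 1))

/-- Coproduct of `HC K`: sum over subgraphs of subgraph ⊗ contracted graph. -/
noncomputable def deltaC (K : Type) [Field K] : HC K →ₗ[K] HC K ⊗[K] HC K :=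
  Finsupp.lsum K fun g => LinearMap.smulRight LinearMap.id
    (∑ S : Finset (Fin g.out.ne),
      Finsupp.single (Quotient.mk graphSetoid (subPre g.out S)) (1 : K) ⊗ₜ
        Finsupp.single (Quotient.mk graphSetoid (conPre g.out S)) (1 : K))

noncomputable def epsC (K : Type) [Field K] : HC K →ₗ[K] K :=
  Finsupp.lapply (Quotient.mk graphSetoid emptyPre)

/-- The forgetful map `π : H → H^c`, sending a TAG `(Γ,μ)` to the underlying graph. -/
noncomputable def piH (K : Type) [Field K] : HT K →ₗ[K] HC K :=
  Finsupp.lsum K fun g => LinearMap.smulRight LinearMap.id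
    (Finsupp.single (Quotient.mk graphSetoid g.out) 1)


/-! ### Auxiliary lemmas -/

section Aux

theorem exists_perm_extend (s : Set ℕ) (hs : s.Finite) (f : ℕ → ℕ)
    (hinj : Set.InjOn f s) : ∃ π : ℕ ≃ ℕ, ∀ x ∈ s, π x = f x := by
  haveI : Infinite (↥sᶜ) := Set.infinite_coe_iff.mpr hs.infinite_compl
  haveI : Infinite (↥(f '' s)ᶜ) := Set.infinite_coe_iff.mpr (hs.image f).infinite_compl
  haveI : Denumerable (↥sᶜ) := Nat.Subtype.denumerable _
  haveI : Denumerable (↥(f '' s)ᶜ) := Nat.Subtype.denumerable _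
  let e2 : ↥s ≃ ↥(f '' s) := Equiv.Set.imageOfInjOn f s hinj
  let e3 : ↥sᶜ ≃ ↥(f '' s)ᶜ := (Denumerable.eqv _).trans (Denumerable.eqv _).symm
  refine ⟨(Equiv.Set.sumCompl s).symm.trans ((Equiv.sumCongr e2 e3).trans
    (Equiv.Set.sumCompl (f '' s))), fun x hx => ?_⟩
  simp only [Equiv.trans_apply]
  rw [Equiv.Set.sumCompl_symm_apply_of_mem hx]
  rfl

def swapPar : ℕ ≃ ℕ where
  toFun n := if n % 2 = 0 then n + 1 else n - 1
  invFun n := if n % 2 = 0 then n + 1 else n - 1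
  left_inv n := by dsimp only; split <;> split <;> omega
  right_inv n := by dsimp only; split <;> split <;> omega

lemma swapPar_even (v : ℕ) : swapPar (2 * v) = 2 * v + 1 := by simp [swapPar]
lemma swapPar_odd (v : ℕ) : swapPar (2 * v + 1) = 2 * v := by
  show (if (2*v+1) % 2 = 0 then (2*v+1) + 1 else (2*v+1) - 1) = 2 * v
  rw [if_neg (by omega)]
  omega

def doubleEquiv (e₁ e₂ : ℕ ≃ ℕ) : ℕ ≃ ℕ where
  toFun n := if n % 2 = 0 then 2 * e₁ (n / 2) else 2 * e₂ (n / 2) + 1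
  invFun n := if n % 2 = 0 then 2 * e₁.symm (n / 2) else 2 * e₂.symm (n / 2) + 1
  left_inv n := by
    dsimp only; split
    · rw [if_pos (by omega), Nat.mul_div_cancel_left _ two_pos, Equiv.symm_apply_apply]; omega
    · rw [if_neg (by omega)]
      have : (2 * e₂ (n / 2) + 1) / 2 = e₂ (n / 2) := by omega
      rw [this, Equiv.symm_apply_apply]; omega
  right_inv n := by
    dsimp only; split
    · rw [if_pos (by omega), Nat.mul_div_cancel_left _ two_pos, Equiv.apply_symm_apply]; omega
    · rw [if_neg (by omega)]
      have : (2 * e₂.symm (n / 2) + 1) / 2 = e₂.symm (n / 2) := by omega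
      rw [this, Equiv.apply_symm_apply]; omega

lemma doubleEquiv_even (e₁ e₂ : ℕ ≃ ℕ) (v : ℕ) : doubleEquiv e₁ e₂ (2 * v) = 2 * e₁ v := by
  show (if (2*v) % 2 = 0 then 2 * e₁ ((2*v) / 2) else _) = _
  rw [if_pos (by omega), Nat.mul_div_cancel_left _ two_pos]

lemma doubleEquiv_odd (e₁ e₂ : ℕ ≃ ℕ) (v : ℕ) : doubleEquiv e₁ e₂ (2 * v + 1) = 2 * e₂ v + 1 := by
  show (if (2*v+1) % 2 = 0 then _ else 2 * e₂ ((2*v+1) / 2) + 1) = _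
  rw [if_neg (by omega)]
  have h : (2*v+1)/2 = v := by omega
  rw [h]

lemma mulPre_ends_inl (a b : PreTAG) (j : Fin a.ne) :
    (mulPre a b).ends (finSumFinEquiv (Sum.inl j)) = (a.ends j).map (fun v => 2 * v) := by
  show (match finSumFinEquiv.symm (finSumFinEquiv (Sum.inl j)) with
    | Sum.inl j => (a.ends j).map (fun v => 2 * v)
    | Sum.inr j => (b.ends j).map (fun v => 2 * v + 1)) = _
  rw [Equiv.symm_apply_apply]

lemma mulPre_ends_inr (a b : PreTAG) (j : Fin b.ne) :
    (mulPre a b).ends (finSumFinEquiv (Sum.inr j)) = (b.ends j).map (fun v => 2 * v + 1) := by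
  show (match finSumFinEquiv.symm (finSumFinEquiv (Sum.inr j)) with
    | Sum.inl j => (a.ends j).map (fun v => 2 * v)
    | Sum.inr j => (b.ends j).map (fun v => 2 * v + 1)) = _
  rw [Equiv.symm_apply_apply]

theorem mulPre_congr {a a' b b' : PreTAG} (ha : GraphRel a a') (hb : GraphRel b b') :
    GraphRel (mulPre a b) (mulPre a' b') := by
  obtain ⟨σ₁, e₁, h₁⟩ := ha
  obtain ⟨σ₂, e₂, h₂⟩ := hb
  refine ⟨finSumFinEquiv.symm.trans ((Equiv.sumCongr σ₁ σ₂).trans finSumFinEquiv),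
    doubleEquiv e₁ e₂, fun i => ?_⟩
  rcases hs : finSumFinEquiv.symm i with j | j
  · have hi2 : finSumFinEquiv (Sum.inl j) = i := by rw [← hs]; exact Equiv.apply_symm_apply _ _
    have hσ : (finSumFinEquiv.symm.trans ((Equiv.sumCongr σ₁ σ₂).trans finSumFinEquiv))
        (finSumFinEquiv (Sum.inl j)) = finSumFinEquiv (Sum.inl (σ₁ j)) := by
      simp only [Equiv.trans_apply, Equiv.symm_apply_apply]; rfl
    subst hi2
    have hstep : Sym2.map (⇑(doubleEquiv e₁ e₂)) ((mulPre a b).ends (finSumFinEquiv (Sum.inl j)))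
        = (mulPre a' b').ends (finSumFinEquiv (Sum.inl (σ₁ j))) := by
      rw [mulPre_ends_inl, mulPre_ends_inl, ← h₁ j, Sym2.map_map, Sym2.map_map]
      congr 1
      funext v
      exact doubleEquiv_even e₁ e₂ v
    exact hstep.trans (congrArg _ hσ.symm)
  · have hi2 : finSumFinEquiv (Sum.inr j) = i := by rw [← hs]; exact Equiv.apply_symm_apply _ _
    have hσ : (finSumFinEquiv.symm.trans ((Equiv.sumCongr σ₁ σ₂).trans finSumFinEquiv))
        (finSumFinEquiv (Sum.inr j)) = finSumFinEquiv (Sum.inr (σ₂ j)) := by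
      simp only [Equiv.trans_apply, Equiv.symm_apply_apply]; rfl
    subst hi2
    have hstep : Sym2.map (⇑(doubleEquiv e₁ e₂)) ((mulPre a b).ends (finSumFinEquiv (Sum.inr j)))
        = (mulPre a' b').ends (finSumFinEquiv (Sum.inr (σ₂ j))) := by
      rw [mulPre_ends_inr, mulPre_ends_inr, ← h₂ j, Sym2.map_map, Sym2.map_map]
      congr 1
      funext v
      exact doubleEquiv_odd e₁ e₂ v
    exact hstep.trans (congrArg _ hσ.symm)

theorem mulPre_comm (a b : PreTAG) : GraphRel (mulPre a b) (mulPre b a) := by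
  refine ⟨finSumFinEquiv.symm.trans ((Equiv.sumComm (Fin a.ne) (Fin b.ne)).trans finSumFinEquiv),
    swapPar, fun i => ?_⟩
  rcases hs : finSumFinEquiv.symm i with j | j
  · have hi2 : finSumFinEquiv (Sum.inl j) = i := by rw [← hs]; exact Equiv.apply_symm_apply _ _
    have hσ : (finSumFinEquiv.symm.trans ((Equiv.sumComm (Fin a.ne) (Fin b.ne)).trans finSumFinEquiv))
        (finSumFinEquiv (Sum.inl j)) = finSumFinEquiv (Sum.inr j) := by
      simp only [Equiv.trans_apply, Equiv.symm_apply_apply]; rfl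
    subst hi2
    have hstep : Sym2.map (⇑swapPar) ((mulPre a b).ends (finSumFinEquiv (Sum.inl j)))
        = (mulPre b a).ends (finSumFinEquiv (Sum.inr j)) := by
      rw [mulPre_ends_inl, mulPre_ends_inr, Sym2.map_map]
      congr 1
      funext v
      exact swapPar_even v
    exact hstep.trans (congrArg _ hσ.symm)
  · have hi2 : finSumFinEquiv (Sum.inr j) = i := by rw [← hs]; exact Equiv.apply_symm_apply _ _
    have hσ : (finSumFinEquiv.symm.trans ((Equiv.sumComm (Fin a.ne) (Fin b.ne)).trans finSumFinEquiv))
        (finSumFinEquiv (Sum.inr j)) = finSumFinEquiv (Sum.inl j) := by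
      simp only [Equiv.trans_apply, Equiv.symm_apply_apply]; rfl
    subst hi2
    have hstep : Sym2.map (⇑swapPar) ((mulPre a b).ends (finSumFinEquiv (Sum.inr j)))
        = (mulPre b a).ends (finSumFinEquiv (Sum.inl j)) := by
      rw [mulPre_ends_inr, mulPre_ends_inl, Sym2.map_map]
      congr 1
      funext v
      exact swapPar_odd v
    exact hstep.trans (congrArg _ hσ.symm)

/-- the least vertex of the `S`-component of `v`. -/
noncomputable def cmpF (a : PreTAG) (S : Finset (Fin a.ne)) (v : ℕ) : ℕ :=
  sInf {u | Relation.EqvGen (conRel a S) u v}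

lemma cmpF_eqv (a : PreTAG) (S : Finset (Fin a.ne)) (v : ℕ) :
    Relation.EqvGen (conRel a S) (cmpF a S v) v := by
  have : cmpF a S v ∈ {u | Relation.EqvGen (conRel a S) u v} :=
    Nat.sInf_mem ⟨v, Relation.EqvGen.refl v⟩
  exact this

lemma cmpF_congr {a : PreTAG} {S : Finset (Fin a.ne)} {u v : ℕ}
    (h : Relation.EqvGen (conRel a S) u v) : cmpF a S u = cmpF a S v := by
  unfold cmpF
  congr 1
  ext w
  exact ⟨fun hw => hw.trans _ _ _ h, fun hw => hw.trans _ _ _ (h.symm _ _)⟩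

lemma cmpF_idem (a : PreTAG) (S : Finset (Fin a.ne)) (v : ℕ) :
    cmpF a S (cmpF a S v) = cmpF a S v :=
  cmpF_congr (cmpF_eqv a S v)

section transfer

variable {a b : PreTAG} {σ : Fin a.ne ≃ Fin b.ne} {e : ℕ ≃ ℕ}
variable (h : ∀ i : Fin a.ne, Sym2.map e (a.ends i) = b.ends (σ i))
variable {S : Finset (Fin a.ne)} {S' : Finset (Fin b.ne)}
variable (hS : ∀ i, i ∈ S ↔ σ i ∈ S')

include h hS in
lemma conRel_transfer {u v : ℕ} (huv : conRel a S u v) : conRel b S' (e u) (e v) := by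
  obtain ⟨i, hi, hu, hv⟩ := huv
  exact ⟨σ i, (hS i).mp hi, by rw [← h i]; exact Sym2.mem_map.mpr ⟨u, hu, rfl⟩,
    by rw [← h i]; exact Sym2.mem_map.mpr ⟨v, hv, rfl⟩⟩

include h hS in
lemma eqvGen_transfer {u v : ℕ} (huv : Relation.EqvGen (conRel a S) u v) :
    Relation.EqvGen (conRel b S') (e u) (e v) := by
  induction huv with
  | rel x y hxy => exact Relation.EqvGen.rel _ _ (conRel_transfer h hS hxy)
  | refl x => exact Relation.EqvGen.refl _
  | symm x y _ ih => exact ih.symm _ _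
  | trans x y z _ _ ih1 ih2 => exact ih1.trans _ _ _ ih2

include h hS in
lemma symm_data : (∀ j : Fin b.ne, Sym2.map e.symm (b.ends j) = a.ends (σ.symm j)) ∧
    (∀ j, j ∈ S' ↔ σ.symm j ∈ S) := by
  constructor
  · intro j
    have hj := h (σ.symm j)
    rw [Equiv.apply_symm_apply] at hj
    rw [← hj, Sym2.map_map]
    simp [Equiv.symm_comp_self]
  · intro j
    rw [hS (σ.symm j), Equiv.apply_symm_apply]

include h hS in
lemma eqvGen_transfer_iff {u v : ℕ} :
    Relation.EqvGen (conRel a S) u v ↔ Relation.EqvGen (conRel b S') (e u) (e v) := by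
  obtain ⟨h', hS'⟩ := symm_data h hS
  refine ⟨eqvGen_transfer h hS, fun hw => ?_⟩
  have := eqvGen_transfer h' hS' hw
  simpa using this

/-- the finite set of vertices of `a`. -/
def verts (a : PreTAG) : Set ℕ := {v | ∃ i, v ∈ a.ends i}

lemma verts_finite (a : PreTAG) : (verts a).Finite := by
  have : verts a = ⋃ i : Fin a.ne, {v | v ∈ a.ends i} := by
    ext v; simp [verts]
  rw [this]
  refine Set.finite_iUnion fun i => ?_
  induction a.ends i using Sym2.ind with
  | _ x y =>
    have : {v | v ∈ s(x, y)} = {x, y} := by ext v; simp [Sym2.mem_iff]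
    rw [this]; exact (Set.finite_singleton y).insert x

include h hS in
lemma exists_vertex_perm : ∃ ε : ℕ ≃ ℕ, ∀ v ∈ verts a,
    ε (cmpF a S v) = cmpF b S' (e v) := by
  have hinj : Set.InjOn (fun x => cmpF b S' (e x)) (cmpF a S '' verts a) := by
    rintro x ⟨vx, _, rfl⟩ y ⟨vy, _, rfl⟩ hxy
    dsimp only at hxy
    have h1 : Relation.EqvGen (conRel b S') (e (cmpF a S vx)) (e (cmpF a S vy)) :=
      ((cmpF_eqv b S' _).symm _ _).trans _ _ _ (hxy ▸ cmpF_eqv b S' (e (cmpF a S vy)))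
    have h2 := (eqvGen_transfer_iff h hS).mpr h1
    calc cmpF a S vx = cmpF a S (cmpF a S vx) := (cmpF_idem a S vx).symm
      _ = cmpF a S (cmpF a S vy) := cmpF_congr h2
      _ = cmpF a S vy := cmpF_idem a S vy
  obtain ⟨π, hπ⟩ := exists_perm_extend (cmpF a S '' verts a) ((verts_finite a).image _)
    (fun x => cmpF b S' (e x)) hinj
  refine ⟨π, fun v hv => ?_⟩
  rw [hπ _ (Set.mem_image_of_mem _ hv)]
  exact cmpF_congr (eqvGen_transfer h hS (cmpF_eqv a S v))

include h hS in
lemma subPre_congr : GraphRel (subPre a S) (subPre b S') := by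
  refine ⟨(S.orderIsoOfFin rfl).toEquiv.trans ((σ.subtypeEquiv hS).trans
    (S'.orderIsoOfFin rfl).toEquiv.symm), e, fun j => ?_⟩
  show Sym2.map e (a.ends ↑(S.orderIsoOfFin rfl j)) = b.ends ↑(S'.orderIsoOfFin rfl _)
  rw [h]
  exact congrArg (fun i => b.ends i) (congrArg Subtype.val
    (Equiv.apply_symm_apply (S'.orderIsoOfFin rfl).toEquiv
      ((σ.subtypeEquiv hS) ((S.orderIsoOfFin rfl).toEquiv j)))).symm

include h hS in
lemma conPre_congr : GraphRel (conPre a S) (conPre b S') := by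
  have hSc : ∀ i, i ∈ Sᶜ ↔ σ i ∈ S'ᶜ := by
    intro i; simp only [Finset.mem_compl]; exact not_congr (hS i)
  obtain ⟨ε, hε⟩ := exists_vertex_perm h hS
  refine ⟨(Sᶜ.orderIsoOfFin rfl).toEquiv.trans ((σ.subtypeEquiv hSc).trans
    (S'ᶜ.orderIsoOfFin rfl).toEquiv.symm), ε, fun j => ?_⟩
  show Sym2.map ε ((a.ends ↑(Sᶜ.orderIsoOfFin rfl j)).map (cmpF a S))
      = (b.ends ↑(S'ᶜ.orderIsoOfFin rfl _)).map (cmpF b S')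
  have hcoe : (↑(S'ᶜ.orderIsoOfFin rfl ((Sᶜ.orderIsoOfFin rfl).toEquiv.trans
      ((σ.subtypeEquiv hSc).trans (S'ᶜ.orderIsoOfFin rfl).toEquiv.symm) j)) : Fin b.ne)
      = σ ↑(Sᶜ.orderIsoOfFin rfl j) :=
    congrArg Subtype.val (Equiv.apply_symm_apply (S'ᶜ.orderIsoOfFin rfl).toEquiv _)
  refine Eq.trans ?_ (congrArg (fun i => Sym2.map (cmpF b S') (b.ends i)) hcoe.symm)
  rw [← h, Sym2.map_map, Sym2.map_map]
  exact Sym2.map_congr (fun v hv => hε v ⟨_, hv⟩)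

end transfer

/-! quotient-level lemmas -/

lemma tag_to_graph {a b : PreTAG} (h : TagRel a b) : GraphRel a b := by
  obtain ⟨hm, e, he⟩ := h
  exact ⟨finCongr hm, e, he⟩

lemma tagOut_eq (p : PreTAG) :
    Quotient.mk graphSetoid ((⟦p⟧ : TAGQ).out) = Quotient.mk graphSetoid p :=
  Quotient.sound (tag_to_graph (Quotient.exact (Quotient.out_eq (⟦p⟧ : TAGQ))))

lemma out_rel (p : PreTAG) : GraphRel ((Quotient.mk graphSetoid p).out) p :=
  Quotient.exact (Quotient.out_eq (Quotient.mk graphSetoid p))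

lemma out_rel' (p : PreTAG) : GraphRel p ((Quotient.mk graphSetoid p).out) :=
  graphSetoid.iseqv.symm (out_rel p)

section singles

variable (K : Type) [Field K]

lemma piH_single (g : TAGQ) (c : K) :
    piH K (Finsupp.single g c) = Finsupp.single (Quotient.mk graphSetoid g.out) c := by
  simp [piH, Finsupp.lsum_single, Finsupp.smul_single]
  exact Finsupp.smul_single_one _ _

lemma mulLin_single (x y : TAGQ) (m n : K) :
    mulLin K (Finsupp.single x m) (Finsupp.single y n) = Finsupp.single (mulQ x y) (m * n) := by
  simp [mulLin, Finsupp.lsum_single, Finsupp.smul_single, mul_comm]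

lemma mulLinC_single (x y : GQ) (m n : K) :
    mulLinC K (Finsupp.single x m) (Finsupp.single y n) =
      Finsupp.single (Quotient.mk graphSetoid (mulPre x.out y.out)) (m * n) := by
  simp [mulLinC, Finsupp.lsum_single, Finsupp.smul_single_one, Finsupp.smul_single, mul_comm, -Finsupp.single_mul]
  rw [smul_smul]
  exact Finsupp.smul_single_one _ _

lemma deltaH_single (g : TAGQ) (c : K) :
    deltaH K (Finsupp.single g c) = c • deltaT K g := by
  simp [deltaH, Finsupp.lsum_single]

lemma deltaC_single (x : GQ) (c : K) :
    deltaC K (Finsupp.single x c) = c •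
      ∑ S : Finset (Fin x.out.ne),
        Finsupp.single (Quotient.mk graphSetoid (subPre x.out S)) (1 : K) ⊗ₜ[K]
          Finsupp.single (Quotient.mk graphSetoid (conPre x.out S)) (1 : K) := by
  simp [deltaC, Finsupp.lsum_single]
  rfl

lemma deltaSum_congr {a b : PreTAG} (hab : GraphRel a b) :
    (∑ S : Finset (Fin a.ne),
      Finsupp.single (Quotient.mk graphSetoid (subPre a S)) (1 : K) ⊗ₜ[K]
        Finsupp.single (Quotient.mk graphSetoid (conPre a S)) (1 : K))
    = ∑ S : Finset (Fin b.ne),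
      Finsupp.single (Quotient.mk graphSetoid (subPre b S)) (1 : K) ⊗ₜ[K]
        Finsupp.single (Quotient.mk graphSetoid (conPre b S)) (1 : K) := by
  obtain ⟨σ, e, h⟩ := hab
  refine Fintype.sum_equiv σ.finsetCongr _ _ fun S => ?_
  have hS : ∀ i, i ∈ S ↔ σ i ∈ σ.finsetCongr S := fun i => by
    simp [Equiv.finsetCongr_apply, Finset.mem_map']
  have h1 : Quotient.mk graphSetoid (subPre a S)
      = Quotient.mk graphSetoid (subPre b (σ.finsetCongr S)) :=
    Quotient.sound (subPre_congr h hS)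
  have h2 : Quotient.mk graphSetoid (conPre a S)
      = Quotient.mk graphSetoid (conPre b (σ.finsetCongr S)) :=
    Quotient.sound (conPre_congr h hS)
  rw [h1, h2]

lemma graph_empty_iff (g : TAGQ) :
    Quotient.mk graphSetoid g.out = Quotient.mk graphSetoid emptyPre ↔
      g = (⟦emptyPre⟧ : TAGQ) := by
  constructor
  · intro hq
    obtain ⟨σ, e, he⟩ := (Quotient.exact hq : GraphRel g.out emptyPre)
    have hne : g.out.ne = emptyPre.ne := by
      have h0 := Fintype.card_congr σ
      simpa using h0
    have htag : TagRel g.out emptyPre := ⟨hne, Equiv.refl ℕ, fun i => (Fin.cast hne i).elim0⟩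
    exact (Quotient.out_eq g).symm.trans (Quotient.sound htag)
  · rintro rfl
    exact tagOut_eq emptyPre

end singles

end Aux

/-- The forgetful map `π` from the Hopf algebra `H` of TAGs to the commutative Hopf
algebra `H^c` of graphs, `π(Γ,μ) = Γ`, is a morphism of Hopf algebras: it respects
product, unit, coproduct and counit (the target product being commutative). -/
theorem tag_forgetful_hopf_morphism (K : Type) [Field K] [CharZero K] :
    (∀ u v : HC K, mulLinC K u v = mulLinC K v u) ∧
    (∀ x y : HT K, piH K (mulLin K x y) = mulLinC K (piH K x) (piH K y)) ∧
    (piH K (oneH K) = oneC K) ∧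
    (TensorProduct.map (piH K) (piH K) ∘ₗ deltaH K = deltaC K ∘ₗ piH K) ∧
    (epsC K ∘ₗ piH K = epsH K) := by
  refine ⟨?_, ?_, ?_, ?_, ?_⟩
  · -- commutativity of the graph product
    intro u v
    induction u using Finsupp.induction_linear with
    | zero => simp
    | add f g hf hg => simp only [map_add, LinearMap.add_apply, hf, hg]
    | single x m =>
      induction v using Finsupp.induction_linear with
      | zero => simp
      | add f g hf hg => simp only [map_add, LinearMap.add_apply, hf, hg]
      | single y n =>
        rw [mulLinC_single, mulLinC_single, Quotient.sound (mulPre_comm x.out y.out), mul_comm]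
  · -- multiplicativity of π
    intro x y
    induction x using Finsupp.induction_linear with
    | zero => simp
    | add f g hf hg => simp only [map_add, LinearMap.add_apply, hf, hg]
    | single a m =>
      induction y using Finsupp.induction_linear with
      | zero => simp
      | add f g hf hg => simp only [map_add, LinearMap.add_apply, hf, hg]
      | single b n =>
        rw [mulLin_single, piH_single, piH_single, piH_single]
        erw [mulLinC_single]
        congr 1
        calc Quotient.mk graphSetoid (mulQ a b).out
            = Quotient.mk graphSetoid (mulPre a.out b.out) := tagOut_eq _
          _ = Quotient.mk graphSetoid
                (mulPre (Quotient.mk graphSetoid a.out).out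
                  (Quotient.mk graphSetoid b.out).out) :=
            Quotient.sound (mulPre_congr (out_rel' a.out) (out_rel' b.out))
  · -- unit
    rw [oneH]
    erw [piH_single, tagOut_eq]
    rfl
  · -- comultiplicativity of π
    refine Finsupp.lhom_ext fun g c => ?_
    rw [LinearMap.comp_apply, LinearMap.comp_apply, deltaH_single, map_smul, piH_single]
    erw [deltaC_single]
    congr 1
    have hmap : TensorProduct.map (piH K) (piH K) (deltaT K g) =
        ∑ S : Finset (Fin g.out.ne),
          Finsupp.single (Quotient.mk graphSetoid (subPre g.out S)) (1 : K) ⊗ₜ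
            Finsupp.single (Quotient.mk graphSetoid (conPre g.out S)) (1 : K) := by
      unfold deltaT
      rw [map_sum]
      refine Finset.sum_congr rfl fun S _ => ?_
      rw [TensorProduct.map_tmul]
      erw [piH_single, piH_single, tagOut_eq, tagOut_eq]
      rfl
    rw [hmap]
    exact deltaSum_congr K (graphSetoid.iseqv.symm (out_rel g.out))
  · -- counit
    refine Finsupp.lhom_ext fun g c => ?_
    rw [LinearMap.comp_apply, piH_single, epsC, epsH]
    erw [Finsupp.lapply_apply,
      Finsupp.lapply_apply, Finsupp.single_apply, Finsupp.single_apply]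
    by_cases hg : g = (⟦emptyPre⟧ : TAGQ)
    · erw [if_pos ((graph_empty_iff g).mpr hg), if_pos hg]
    · erw [if_neg (fun hq => hg ((graph_empty_iff g).mp hq)), if_neg hg]
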